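/- Let φ₁, φ₂, … be a sequence of vectors in ℝ^d with ‖φᵢ‖₂ ≤ 1 for all i ≥ 1. Let Λ₀ = I and Λₜ = I + Σᵢ₌₁ᵗ φᵢφᵢᵀ for t ≥ 1. Then for every t ≥ 1, Σᵢ₌₁ᵗ φᵢᵀ Λᵢ₋₁⁻¹ φᵢ ≤ 2·log det(Λₜ) ≤ 2d·log(1 + t). -/

import Mathlib

open Matrix Finset

private lemma ep_vecMulVec_mulVec {d : ℕ} (v x : Fin d → ℝ) :
    vecMulVec v v *ᵥ x = (v ⬝ᵥ x) • v := by
  ext i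
  simp [mulVec, dotProduct, vecMulVec_apply, Finset.mul_sum, Finset.sum_mul, mul_comm,
    mul_left_comm]

private lemma ep_posSemidef_vecMulVec {d : ℕ} (v : Fin d → ℝ) :
    (vecMulVec v v).PosSemidef := by
  refine Matrix.PosSemidef.of_dotProduct_mulVec_nonneg ?_ ?_
  · ext i j
    simp [vecMulVec_apply, mul_comm, conjTranspose_apply]
  · intro y
    rw [ep_vecMulVec_mulVec]
    simp only [star_trivial, dotProduct_smul, smul_eq_mul]
    rw [dotProduct_comm]
    exact mul_self_nonneg _

private lemma ep_norm_sq_le_one {d : ℕ} (v : Fin d → ℝ)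
    (hv : Real.sqrt (∑ j, v j ^ 2) ≤ 1) : v ⬝ᵥ v ≤ 1 := by
  have h0 : (0 : ℝ) ≤ ∑ j, v j ^ 2 := Finset.sum_nonneg fun j _ => sq_nonneg _
  have h1 : ∑ j, v j ^ 2 ≤ 1 := by
    nlinarith [Real.sq_sqrt h0, Real.sqrt_nonneg (∑ j, v j ^ 2)]
  calc v ⬝ᵥ v = ∑ j, v j ^ 2 := by simp [dotProduct, sq]
    _ ≤ 1 := h1

private lemma ep_det_step {d : ℕ} (A : Matrix (Fin d) (Fin d) ℝ) (hA : A.PosDef)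
    (v : Fin d → ℝ) :
    (A + vecMulVec v v).det = A.det * (1 + v ⬝ᵥ (A⁻¹ *ᵥ v)) := by
  rw [vecMulVec_eq Unit, det_add_replicateCol_mul_replicateRow (isUnit_iff_ne_zero.2 hA.det_pos.ne') v v]
  congr 1
  rw [Matrix.mul_assoc, ← replicateCol_mulVec, det_unique]
  simp [Matrix.one_apply_eq]

private lemma ep_quad_inv_le {d : ℕ} (S : Matrix (Fin d) (Fin d) ℝ) (hS : S.PosSemidef)
    (v : Fin d → ℝ) (hv : v ⬝ᵥ v ≤ 1) :
    v ⬝ᵥ ((1 + S)⁻¹ *ᵥ v) ≤ 1 := by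
  have hA : (1 + S).PosDef := Matrix.PosDef.one.add_posSemidef hS
  set w := (1 + S)⁻¹ *ᵥ v with hw
  have hvw : (1 + S) *ᵥ w = v := by
    rw [hw, mulVec_mulVec, Matrix.mul_nonsing_inv _ (isUnit_iff_ne_zero.2 hA.det_pos.ne'),
      one_mulVec]
  have hq1 : 0 ≤ w ⬝ᵥ (S *ᵥ w) := by simpa using hS.dotProduct_mulVec_nonneg w
  have hq2 : 0 ≤ (S *ᵥ w) ⬝ᵥ (S *ᵥ w) := Finset.sum_nonneg fun i _ => mul_self_nonneg _
  have hcomm : (S *ᵥ w) ⬝ᵥ w = w ⬝ᵥ (S *ᵥ w) := dotProduct_comm _ _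
  have e1 : v ⬝ᵥ w = w ⬝ᵥ w + w ⬝ᵥ (S *ᵥ w) := by
    conv_lhs => rw [← hvw]
    rw [add_mulVec, one_mulVec, add_dotProduct, hcomm]
  have e2 : v ⬝ᵥ v = w ⬝ᵥ w + 2 * (w ⬝ᵥ (S *ᵥ w)) + (S *ᵥ w) ⬝ᵥ (S *ᵥ w) := by
    conv_lhs => rw [← hvw]
    rw [add_mulVec, one_mulVec, add_dotProduct, dotProduct_add, dotProduct_add, hcomm]
    ring
  linarith

private lemma ep_x_le_two_log {x : ℝ} (h0 : 0 ≤ x) (h1 : x ≤ 1) :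
    x ≤ 2 * Real.log (1 + x) := by
  have hx : (0 : ℝ) < 1 + x := by linarith
  have hexp : Real.exp (x / 2) ≤ 1 + x := by
    have ha : 0 < Real.exp (x / 2) := Real.exp_pos _
    have hb : 1 - x / 2 ≤ Real.exp (-(x / 2)) := by
      have := Real.add_one_le_exp (-(x / 2)); linarith
    have hc : Real.exp (-(x / 2)) * Real.exp (x / 2) = 1 := by
      rw [← Real.exp_add]; simp
    nlinarith
  have := (Real.le_log_iff_exp_le hx).2 hexp
  linarith

private lemma ep_quad_sum {d : ℕ} (φ : ℕ → Fin d → ℝ) (v : Fin d → ℝ) (t : ℕ) :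
    v ⬝ᵥ ((∑ k ∈ Finset.range t, vecMulVec (φ k) (φ k)) *ᵥ v)
      = ∑ k ∈ Finset.range t, (φ k ⬝ᵥ v) ^ 2 := by
  induction t with
  | zero => simp
  | succ t ih =>
      rw [Finset.sum_range_succ, Finset.sum_range_succ, add_mulVec, dotProduct_add, ih,
        ep_vecMulVec_mulVec, dotProduct_smul, smul_eq_mul, dotProduct_comm v (φ t), sq]

/-- Elliptical potential lemma: for vectors `φ₁, φ₂, …` in `ℝ^d` with `‖φᵢ‖₂ ≤ 1`
(here `φ i` denotes `φ_{i+1}`, so `Λ t = I + Σ_{i<t} φᵢφᵢᵀ`), for every `t ≥ 1`,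
`Σ_{i<t} φᵢᵀ Λᵢ⁻¹ φᵢ ≤ 2 log det(Λₜ) ≤ 2d log(1 + t)`. -/
theorem stmt_11 (d : ℕ) (hd : 1 ≤ d) (φ : ℕ → Fin d → ℝ)
    (hφ : ∀ i, Real.sqrt (∑ j, φ i j ^ 2) ≤ 1) (t : ℕ) (ht : 1 ≤ t) :
    (∑ i ∈ Finset.range t, φ i ⬝ᵥ
        ((((1 : Matrix (Fin d) (Fin d) ℝ) +
            ∑ k ∈ Finset.range i, vecMulVec (φ k) (φ k))⁻¹) *ᵥ φ i)) ≤
      2 * Real.log ((1 : Matrix (Fin d) (Fin d) ℝ) +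
          ∑ k ∈ Finset.range t, vecMulVec (φ k) (φ k)).det ∧
    2 * Real.log ((1 : Matrix (Fin d) (Fin d) ℝ) +
        ∑ k ∈ Finset.range t, vecMulVec (φ k) (φ k)).det ≤
      2 * d * Real.log (1 + t) := by
  have hSsd : ∀ n, (∑ k ∈ Finset.range n, vecMulVec (φ k) (φ k)).PosSemidef := by
    intro n
    induction n with
    | zero => simpa using (Matrix.PosSemidef.zero (n := Fin d) (R := ℝ))
    | succ n ih =>
        rw [Finset.sum_range_succ]
        exact ih.add (ep_posSemidef_vecMulVec _)
  set Λ : ℕ → Matrix (Fin d) (Fin d) ℝ :=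
    fun n => 1 + ∑ k ∈ Finset.range n, vecMulVec (φ k) (φ k) with hΛdef
  have hΛpd : ∀ n, (Λ n).PosDef := fun n => Matrix.PosDef.one.add_posSemidef (hSsd n)
  set x : ℕ → ℝ := fun i => φ i ⬝ᵥ ((Λ i)⁻¹ *ᵥ φ i) with hxdef
  have hx0 : ∀ i, 0 ≤ x i := by
    intro i
    have h := ((hΛpd i).inv).posSemidef.dotProduct_mulVec_nonneg (φ i)
    simpa [hxdef] using h
  have hx1 : ∀ i, x i ≤ 1 := fun i =>
    ep_quad_inv_le _ (hSsd i) _ (ep_norm_sq_le_one _ (hφ i))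
  have hstep : ∀ n, (Λ (n + 1)).det = (Λ n).det * (1 + x n) := by
    intro n
    have h : Λ (n + 1) = Λ n + vecMulVec (φ n) (φ n) := by
      simp only [hΛdef, Finset.sum_range_succ, add_assoc]
    rw [h, ep_det_step _ (hΛpd n)]
  have main : ∀ n, (∑ i ∈ Finset.range n, x i) ≤ 2 * Real.log (Λ n).det := by
    intro n
    induction n with
    | zero => simp [hΛdef]
    | succ n ih =>
        rw [Finset.sum_range_succ, hstep n,
          Real.log_mul (hΛpd n).det_pos.ne' (by nlinarith [hx0 n] : (1 : ℝ) + x n ≠ 0)]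
        have := ep_x_le_two_log (hx0 n) (hx1 n)
        linarith
  refine ⟨main t, ?_⟩
  have hH := (hΛpd t).1
  have hdet : (Λ t).det = ∏ j, hH.eigenvalues j := by
    simpa using hH.det_eq_prod_eigenvalues
  have hev_le : ∀ j, hH.eigenvalues j ≤ 1 + t := by
    intro j
    set v : Fin d → ℝ := (hH.eigenvectorBasis j : Fin d → ℝ) with hvdef
    have hvv : v ⬝ᵥ v = 1 := by
      have h := hH.eigenvectorBasis.orthonormal.1 j
      have h2 := EuclideanSpace.norm_eq (hH.eigenvectorBasis j)
      rw [h] at h2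
      have h3 : ∑ i, ‖v i‖ ^ 2 = 1 := by
        rw [← Real.sqrt_eq_one]
        exact h2.symm
      simp only [dotProduct, ← sq]
      simpa [Real.norm_eq_abs, sq_abs] using h3
    have heq : hH.eigenvalues j = v ⬝ᵥ (Λ t *ᵥ v) := by
      have := hH.eigenvalues_eq j
      simpa using this
    have hvv2 : ∑ i, v i ^ 2 = 1 := by
      rw [← hvv]; simp [dotProduct, sq]
    have hbound : ∀ k, (φ k ⬝ᵥ v) ^ 2 ≤ 1 := by
      intro k
      have hcs := Finset.sum_mul_sq_le_sq_mul_sq Finset.univ (φ k) v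
      have hφ2 : ∑ i, φ k i ^ 2 ≤ 1 := by
        have := ep_norm_sq_le_one (φ k) (hφ k)
        calc ∑ i, φ k i ^ 2 = φ k ⬝ᵥ φ k := by simp [dotProduct, sq]
          _ ≤ 1 := this
      have h0 : (0 : ℝ) ≤ ∑ i, v i ^ 2 := Finset.sum_nonneg fun i _ => sq_nonneg _
      calc (φ k ⬝ᵥ v) ^ 2 ≤ (∑ i, φ k i ^ 2) * ∑ i, v i ^ 2 := hcs
        _ ≤ 1 := by rw [hvv2]; simpa using hφ2
    rw [heq]
    have hexp : v ⬝ᵥ (Λ t *ᵥ v) = 1 + ∑ k ∈ Finset.range t, (φ k ⬝ᵥ v) ^ 2 := by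
      simp only [hΛdef]
      rw [add_mulVec, one_mulVec, dotProduct_add, hvv, ep_quad_sum]
    rw [hexp]
    have : ∑ k ∈ Finset.range t, (φ k ⬝ᵥ v) ^ 2 ≤ ∑ k ∈ Finset.range t, (1 : ℝ) :=
      Finset.sum_le_sum fun k _ => hbound k
    simpa using this
  have hdetle : (Λ t).det ≤ (1 + (t : ℝ)) ^ d := by
    rw [hdet]
    calc ∏ j, hH.eigenvalues j ≤ ∏ _j : Fin d, (1 + (t : ℝ)) :=
          Finset.prod_le_prod (fun j _ => ((hΛpd t).eigenvalues_pos j).le)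
            (fun j _ => hev_le j)
      _ = (1 + (t : ℝ)) ^ d := by simp
  have hlog : Real.log (Λ t).det ≤ (d : ℝ) * Real.log (1 + (t : ℝ)) := by
    calc Real.log (Λ t).det ≤ Real.log ((1 + (t : ℝ)) ^ d) :=
          Real.log_le_log (hΛpd t).det_pos hdetle
      _ = (d : ℝ) * Real.log (1 + (t : ℝ)) := by rw [Real.log_pow]
  nlinarith [hlog]
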